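/- Under the standing setup, let μ be a Borel probability measure on X with compact support A. Then μ is an attracting measure if and only if there is an open neighbourhood U of A with m(U) < ∞ such that for all bounded continuous functions g₁, g₂ : X → ℝ, the operational correlation ∫_U g₁(x) g₂(f^t x) m(dx) − (∫_U g₁ dm)(∫_A g₂ dμ) tends to 0 as t → ∞. -/

import Mathlib

open MeasureTheory Filter Topology Set
open scoped NNReal ENNReal

/-- The (topological) support of a measure: the set of points all of whose open
neighbourhoods have positive measure. -/
def msupp {X : Type*} [TopologicalSpace X] [MeasurableSpace X] (μ : Measure X) : Set X :=
  {x | ∀ U : Set X, IsOpen U → x ∈ U → 0 < μ U}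

/-- `μ` is an attracting measure (w.r.t. the reference measure `m` and semiflow `f`):
it is a compactly supported Borel probability measure whose support admits an open
neighbourhood `U` such that every `m`-absolutely continuous probability measure `ν` with
`ν U = 1` satisfies `f^t ν → μ` weakly as `t → ∞`. -/
def AttractingMeasure {X : Type*} [TopologicalSpace X] [MeasurableSpace X]
    (m : Measure X) (f : ℝ → X → X) (μ : Measure X) : Prop :=
  IsProbabilityMeasure μ ∧ IsCompact (msupp μ) ∧
    ∃ U : Set X, IsOpen U ∧ msupp μ ⊆ U ∧
      ∀ ν : Measure X, IsProbabilityMeasure ν → ν ≪ m → ν U = 1 →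
        ∀ g : BoundedContinuousFunction X ℝ,
          Tendsto (fun t : ℝ => ∫ x, g x ∂(ν.map (f t))) atTop (𝓝 (∫ x, g x ∂μ))

/-- Under the standing setup, let `μ` be a Borel probability measure
with compact support `A`. Then `μ` is attracting if and only if there is an open
neighbourhood `U` of `A` with `m U < ∞` such that for all bounded continuous
`g₁, g₂ : X → ℝ`, the operational correlation
`∫_U g₁(x) g₂(f^t x) dm − (∫_U g₁ dm)(∫_A g₂ dμ)` tends to `0` as `t → ∞`. -/
theorem stmt_8 {X : Type*} [MetricSpace X] [TopologicalSpace.SeparableSpace X]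
    [MeasurableSpace X] [BorelSpace X]
    (m : Measure X) [IsLocallyFiniteMeasure m] [m.IsOpenPosMeasure]
    (f : ℝ → X → X)
    (hf0 : f 0 = id)
    (hfadd : ∀ s t : ℝ, 0 ≤ s → 0 ≤ t → f (s + t) = f s ∘ f t)
    (hcont : ContinuousOn (fun p : ℝ × X => f p.1 p.2) (Set.Ici 0 ×ˢ Set.univ))
    (hcover : ∀ x : X, ∃ V : Set X, IsOpen V ∧ x ∈ V ∧
      ∀ t : ℝ, 0 ≤ t → ∃ D : ℝ≥0, ∀ S : Set X, MeasurableSet S →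
        m (V ∩ f t ⁻¹' S) ≤ (D : ℝ≥0∞) * m S)
    (μ : Measure X) [IsProbabilityMeasure μ]
    (A : Set X) (hA : A = msupp μ) (hAcomp : IsCompact A) :
    AttractingMeasure m f μ ↔
      ∃ U : Set X, IsOpen U ∧ A ⊆ U ∧ m U < ⊤ ∧
        ∀ g₁ g₂ : BoundedContinuousFunction X ℝ,
          Tendsto
            (fun t : ℝ =>
              (∫ x in U, g₁ x * g₂ (f t x) ∂m) -
                (∫ x in U, g₁ x ∂m) * (∫ x in A, g₂ x ∂μ))
            atTop (𝓝 0) := by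
  haveI hsc : SecondCountableTopology X := UniformSpace.secondCountable_of_separable X
  have hfc : ∀ t : ℝ, 0 ≤ t → Continuous (f t) := by
    intro t ht
    exact hcont.comp_continuous (continuous_const.prodMk continuous_id)
      (fun x => ⟨ht, mem_univ x⟩)
  have hμA : μ Aᶜ = 0 := by
    apply measure_null_of_locally_null
    intro x hx
    simp only [hA, msupp, mem_compl_iff, mem_setOf_eq] at hx
    push_neg at hx
    obtain ⟨V, hVo, hxV, hV0⟩ := hx
    exact ⟨V, mem_nhdsWithin_of_mem_nhds (hVo.mem_nhds hxV), le_antisymm hV0 (by simp)⟩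
  have hrestrA : μ.restrict A = μ :=
    Measure.restrict_eq_self_of_ae_mem (by rw [ae_iff]; exact hμA)
  have hAint : ∀ g : BoundedContinuousFunction X ℝ,
      ∫ x in A, g x ∂μ = ∫ x, g x ∂μ := fun g => by rw [hrestrA]
  constructor
  · rintro ⟨hprob, hcomp, U₀, hU₀o, hU₀s, hconv⟩
    obtain ⟨U₁, hAU₁, hU₁o, hU₁fin⟩ := hAcomp.exists_open_superset_measure_lt_top m
    refine ⟨U₁ ∩ U₀, hU₁o.inter hU₀o, subset_inter hAU₁ (by rw [hA]; exact hU₀s),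
      lt_of_le_of_lt (measure_mono inter_subset_left) hU₁fin, ?_⟩
    set U : Set X := U₁ ∩ U₀ with hUdef
    have hUo : IsOpen U := hU₁o.inter hU₀o
    have hUfin : m U < ⊤ := lt_of_le_of_lt (measure_mono inter_subset_left) hU₁fin
    have hUU₀ : U ⊆ U₀ := inter_subset_right
    intro g₁ g₂
    have key : ∀ h : BoundedContinuousFunction X ℝ, (∀ x, 0 ≤ h x) →
        Tendsto (fun t => ∫ x in U, h x * g₂ (f t x) ∂m) atTop
          (𝓝 ((∫ x in U, h x ∂m) * ∫ x, g₂ x ∂μ)) := by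
      intro h hh
      have hUm : MeasurableSet U := hUo.measurableSet
      haveI : Fact (m U < ∞) := ⟨hUfin⟩
      have hhm : Measurable fun x => ENNReal.ofReal (h x) :=
        (ENNReal.continuous_ofReal.comp h.continuous).measurable
      set c : ℝ≥0∞ := ∫⁻ x in U, ENNReal.ofReal (h x) ∂m with hc
      have hcfin : c ≠ ∞ := by
        have hb : c ≤ ∫⁻ _ in U, ENNReal.ofReal ‖h‖ ∂m :=
          lintegral_mono fun x => ENNReal.ofReal_le_ofReal
            ((le_abs_self _).trans (h.norm_coe_le_norm x))
        rw [lintegral_const] at hb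
        exact (hb.trans_lt (by
          refine ENNReal.mul_lt_top ENNReal.ofReal_lt_top ?_
          simpa [Measure.restrict_apply] using hUfin)).ne
      have hint : ∫ x in U, h x ∂m = c.toReal := by
        rw [hc, integral_eq_lintegral_of_nonneg_ae (Eventually.of_forall hh)
          h.continuous.aestronglyMeasurable]
      by_cases hc0 : c = 0
      · have hz : (fun x => ENNReal.ofReal (h x)) =ᵐ[m.restrict U] 0 :=
          (lintegral_eq_zero_iff hhm).mp hc0
        have hz' : (fun x => h x) =ᵐ[m.restrict U] 0 := hz.mono fun x hx => by
          have : ENNReal.ofReal (h x) = 0 := hx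
          have := ENNReal.ofReal_eq_zero.mp this
          exact le_antisymm this (hh x)
        have h1 : ∫ x in U, h x ∂m = 0 := by
          rw [integral_congr_ae hz']; simp
        have h2 : ∀ t : ℝ, ∫ x in U, h x * g₂ (f t x) ∂m = 0 := fun t => by
          rw [integral_congr_ae (hz'.mono fun x hx => by
            show h x * g₂ (f t x) = 0
            rw [show h x = 0 from hx, zero_mul])]
          simp
        simp only [h1, h2, zero_mul]
        exact tendsto_const_nhds
      · set c' : ℝ≥0 := c.toNNReal with hc'
        have hc'0 : c' ≠ 0 := by simp [hc', ENNReal.toNNReal_eq_zero_iff, hc0, hcfin]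
        have hc'c : (c' : ℝ≥0∞) = c := ENNReal.coe_toNNReal hcfin
        have hdm : Measurable fun x => (c'⁻¹ * (h x).toNNReal : ℝ≥0) :=
          (measurable_const.mul (measurable_real_toNNReal.comp h.continuous.measurable))
        set ν : Measure X := (m.restrict U).withDensity
          (fun x => ((c'⁻¹ * (h x).toNNReal : ℝ≥0) : ℝ≥0∞)) with hν
        have hcoe : ∀ x : X, ((c'⁻¹ * (h x).toNNReal : ℝ≥0) : ℝ≥0∞)
            = c⁻¹ * ENNReal.ofReal (h x) := by
          intro x
          rw [ENNReal.coe_mul, ENNReal.coe_inv hc'0, hc'c, ENNReal.ofReal]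
        have hνuniv : ν univ = 1 := by
          rw [hν, withDensity_apply _ MeasurableSet.univ, Measure.restrict_univ]
          simp only [hcoe]
          rw [lintegral_const_mul _ hhm, ← hc, ENNReal.inv_mul_cancel hc0 hcfin]
        haveI hνprob : IsProbabilityMeasure ν := ⟨hνuniv⟩
        have hνm : ν ≪ m :=
          (withDensity_absolutelyContinuous _ _).trans
            (Measure.absolutelyContinuous_of_le Measure.restrict_le_self)
        have hνU₀ : ν U₀ = 1 := by
          refine le_antisymm prob_le_one ?_
          have hνU : ν U = 1 := by
            rw [hν, withDensity_apply _ hUm, Measure.restrict_restrict hUm, inter_self]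
            simp only [hcoe]
            rw [lintegral_const_mul _ hhm, ← hc, ENNReal.inv_mul_cancel hc0 hcfin]
          calc (1 : ℝ≥0∞) = ν U := hνU.symm
            _ ≤ ν U₀ := measure_mono hUU₀
        have hmain := hconv ν hνprob hνm hνU₀ g₂
        have hkey : ∀ t : ℝ, 0 ≤ t →
            ∫ x, g₂ x ∂(ν.map (f t)) = (c'⁻¹ : ℝ≥0∞).toReal * ∫ x in U, h x * g₂ (f t x) ∂m := by
          intro t ht
          rw [integral_map (hfc t ht).aemeasurable g₂.continuous.aestronglyMeasurable, hν,
            integral_withDensity_eq_integral_smul hdm]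
          rw [← integral_const_mul]
          congr 1
          ext x
          have hx : ((h x).toNNReal : ℝ) = h x := Real.coe_toNNReal _ (hh x)
          simp [NNReal.smul_def, ENNReal.coe_toReal, hx, mul_assoc]
        have hfin : Tendsto (fun t : ℝ => ∫ x in U, h x * g₂ (f t x) ∂m) atTop
            (𝓝 ((c' : ℝ≥0∞).toReal * ∫ x, g₂ x ∂μ)) := by
          have := hmain.const_mul ((c' : ℝ≥0∞).toReal)
          refine this.congr' ?_
          filter_upwards [eventually_ge_atTop (0:ℝ)] with t ht
          rw [hkey t ht, ← mul_assoc]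
          have : (c' : ℝ≥0∞).toReal * (c'⁻¹ : ℝ≥0∞).toReal = 1 := by
            rw [← ENNReal.toReal_mul, ENNReal.mul_inv_cancel (by exact_mod_cast hc'0)
              (by simp [hc'c, hcfin])]
            simp
          rw [this, one_mul]
        have : (c' : ℝ≥0∞).toReal = c.toReal := by rw [hc'c]
        rw [hint, ← this]
        exact hfin
    haveI : Fact (m U < ∞) := ⟨hUfin⟩
    have hposx : ∀ x, 0 ≤ (g₁ ⊔ 0) x := fun x => by
      simp [BoundedContinuousFunction.coe_sup]
    have hnegx : ∀ x, 0 ≤ (-g₁ ⊔ 0) x := fun x => by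
      simp [BoundedContinuousFunction.coe_sup]
    have hpos := key (g₁ ⊔ 0) hposx
    have hneg := key (-g₁ ⊔ 0) hnegx
    have hdiff : ∀ x : X, (g₁ ⊔ 0) x - (-g₁ ⊔ 0) x = g₁ x := fun x => by
      simp only [BoundedContinuousFunction.coe_sup, Pi.sup_apply,
        BoundedContinuousFunction.coe_zero, Pi.zero_apply,
        BoundedContinuousFunction.coe_neg, Pi.neg_apply]
      exact max_zero_sub_max_neg_zero_eq_self (g₁ x)
    have hlim : Tendsto (fun t : ℝ => ∫ x in U, g₁ x * g₂ (f t x) ∂m) atTop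
        (𝓝 ((∫ x in U, g₁ x ∂m) * ∫ x, g₂ x ∂μ)) := by
      have hint : ∫ x in U, g₁ x ∂m
          = (∫ x in U, (g₁ ⊔ 0) x ∂m) - ∫ x in U, (-g₁ ⊔ 0) x ∂m := by
        rw [← integral_sub ((g₁ ⊔ 0).integrable _) ((-g₁ ⊔ 0).integrable _)]
        exact (integral_congr_ae (Eventually.of_forall fun x => (hdiff x).symm))
      rw [hint, sub_mul]
      refine (hpos.sub hneg).congr' ?_
      filter_upwards [eventually_ge_atTop (0:ℝ)] with t ht
      set G : BoundedContinuousFunction X ℝ := g₂.compContinuous ⟨f t, hfc t ht⟩ with hGdef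
      have h1 : Integrable (fun x => (g₁ ⊔ 0) x * g₂ (f t x)) (m.restrict U) := by
        have := ((g₁ ⊔ 0) * G).integrable (m.restrict U)
        exact this.congr (Eventually.of_forall fun x => rfl)
      have h2 : Integrable (fun x => (-g₁ ⊔ 0) x * g₂ (f t x)) (m.restrict U) := by
        have := ((-g₁ ⊔ 0) * G).integrable (m.restrict U)
        exact this.congr (Eventually.of_forall fun x => rfl)
      rw [← integral_sub h1 h2]
      refine integral_congr_ae (Eventually.of_forall fun x => ?_)
      show (g₁ ⊔ 0) x * g₂ (f t x) - (-g₁ ⊔ 0) x * g₂ (f t x) = g₁ x * g₂ (f t x)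
      rw [← sub_mul, hdiff]
    rw [hAint g₂]
    simpa using hlim.sub_const ((∫ x in U, g₁ x ∂m) * ∫ x, g₂ x ∂μ)
  · rintro ⟨U, hUo, hAU, hUfin, hcor⟩
    refine ⟨inferInstance, hA ▸ hAcomp, U, hUo, hA ▸ hAU, ?_⟩
    intro ν hνp hνm hνU g
    have hUm : MeasurableSet U := hUo.measurableSet
    haveI : Fact (m U < ∞) := ⟨hUfin⟩
    haveI : SigmaFinite m := inferInstance
    set ρ : X → ℝ := fun x => (ν.rnDeriv m x).toReal with hρ
    have hρint : Integrable ρ m := Measure.integrable_toReal_rnDeriv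
    have hνUc : ν Uᶜ = 0 := by
      have := measure_compl hUm (measure_ne_top ν U)
      rw [hνU] at this
      simpa [measure_univ] using this
    have hρ0 : ρ =ᵐ[m.restrict Uᶜ] 0 := by
      have hl : ∫⁻ x in Uᶜ, ν.rnDeriv m x ∂m = 0 := by
        rw [Measure.setLIntegral_rnDeriv hνm]; exact hνUc
      have := (lintegral_eq_zero_iff (ν.measurable_rnDeriv m)).mp hl
      filter_upwards [this] with x hx
      simp [hρ, hx]
    have hρU1 : ∫ x in U, ρ x ∂m = 1 := by
      rw [hρ]
      rw [Measure.setIntegral_toReal_rnDeriv hνm U, measureReal_def, hνU]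
      simp
    -- reduction of the integral for t ≥ 0
    have hrepr : ∀ t : ℝ, 0 ≤ t →
        ∫ x, g x ∂(ν.map (f t)) = ∫ x in U, ρ x * g (f t x) ∂m := by
      intro t ht
      rw [integral_map (hfc t ht).aemeasurable g.continuous.aestronglyMeasurable]
      have h1 : ∫ x, g (f t x) ∂ν = ∫ x, ρ x • g (f t x) ∂m :=
        (integral_rnDeriv_smul hνm).symm
      have hintm : Integrable (fun x => ρ x • g (f t x)) m := by
        rw [integrable_rnDeriv_smul_iff hνm]
        exact (g.compContinuous ⟨f t, hfc t ht⟩).integrable ν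
      rw [h1, ← integral_add_compl hUm hintm]
      have h2 : ∫ x in Uᶜ, ρ x • g (f t x) ∂m = 0 := by
        rw [integral_congr_ae (hρ0.mono fun x hx => by
          show ρ x • g (f t x) = 0
          rw [hx]; simp)]
        simp
      rw [h2, add_zero]
      simp [smul_eq_mul]
    -- metric tendsto
    rw [Metric.tendsto_atTop]
    intro ε hε
    set M : ℝ := ‖g‖ + 1 with hM
    have hM0 : 0 < M := by positivity
    have hgM : ∀ x, |g x| ≤ M := fun x =>
      le_trans (g.norm_coe_le_norm x) (by simp [hM])
    set L : ℝ := ∫ x, g x ∂μ with hL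
    have hLM : |L| ≤ M := by
      rw [hL]
      calc |∫ x, g x ∂μ| ≤ ∫ x, |g x| ∂μ := by
            simpa [Real.norm_eq_abs] using norm_integral_le_integral_norm (μ := μ) fun x => g x
        _ ≤ ∫ _x, M ∂μ := integral_mono (g.integrable μ).abs (integrable_const M) hgM
        _ = M := by simp
    have habs : ∀ F : X → ℝ, |∫ x in U, F x ∂m| ≤ ∫ x in U, |F x| ∂m := fun F => by
      simpa [Real.norm_eq_abs] using norm_integral_le_integral_norm (μ := m.restrict U) F
    set δ : ℝ := ε / (3 * M) with hδ
    have hδ0 : 0 < δ := by positivity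
    obtain ⟨g₁, hg₁close, -⟩ :=
      (hρint.restrict (s := U)).exists_boundedContinuous_integral_sub_le hδ0
    have hg₁int : Integrable (fun x => g₁ x) (m.restrict U) := g₁.integrable _
    have hdiffint : Integrable (fun x => ‖ρ x - g₁ x‖) (m.restrict U) :=
      ((hρint.restrict).sub hg₁int).norm
    have hC₁ : |(∫ x in U, g₁ x ∂m) - 1| ≤ δ := by
      rw [← hρU1, ← integral_sub hg₁int hρint.restrict]
      calc |∫ x in U, (g₁ x - ρ x) ∂m| ≤ ∫ x in U, |g₁ x - ρ x| ∂m := habs _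
        _ = ∫ x in U, ‖ρ x - g₁ x‖ ∂m := by
            refine integral_congr_ae (Eventually.of_forall fun x => ?_)
            simp [Real.norm_eq_abs, abs_sub_comm]
        _ ≤ δ := hg₁close
    obtain ⟨N, hN⟩ := Metric.tendsto_atTop.mp (hcor g₁ g) (ε / 3) (by positivity)
    refine ⟨max N 0, fun t ht => ?_⟩
    have htN : N ≤ t := le_trans (le_max_left _ _) ht
    have ht0 : (0:ℝ) ≤ t := le_trans (le_max_right _ _) ht
    have hG : Continuous fun x => g (f t x) := g.continuous.comp (hfc t ht0)
    set G : BoundedContinuousFunction X ℝ := g.compContinuous ⟨f t, hfc t ht0⟩ with hGdef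
    have hint1 : Integrable (fun x => ρ x * g (f t x)) (m.restrict U) := by
      have hintm : Integrable (fun x => ρ x • g (f t x)) m := by
        rw [integrable_rnDeriv_smul_iff hνm]
        exact G.integrable ν
      simpa [smul_eq_mul] using hintm.restrict (s := U)
    have hint2 : Integrable (fun x => g₁ x * g (f t x)) (m.restrict U) := by
      exact ((g₁ * G).integrable (m.restrict U)).congr (Eventually.of_forall fun x => rfl)
    -- the three-term estimate
    have e1 : |(∫ x in U, ρ x * g (f t x) ∂m) - ∫ x in U, g₁ x * g (f t x) ∂m| ≤ ε / 3 := by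
      rw [← integral_sub hint1 hint2]
      have step : |∫ x in U, (ρ x * g (f t x) - g₁ x * g (f t x)) ∂m|
          ≤ ∫ x in U, ‖ρ x - g₁ x‖ * M ∂m := by
        calc |∫ x in U, (ρ x * g (f t x) - g₁ x * g (f t x)) ∂m|
            ≤ ∫ x in U, |ρ x * g (f t x) - g₁ x * g (f t x)| ∂m := habs _
          _ ≤ ∫ x in U, ‖ρ x - g₁ x‖ * M ∂m := by
              refine integral_mono (hint1.sub hint2).abs (hdiffint.mul_const M)
                fun x => ?_
              rw [← sub_mul, abs_mul, Real.norm_eq_abs]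
              exact mul_le_mul_of_nonneg_left (hgM _) (abs_nonneg _)
      refine step.trans ?_
      rw [integral_mul_const]
      calc (∫ x in U, ‖ρ x - g₁ x‖ ∂m) * M ≤ δ * M :=
            mul_le_mul_of_nonneg_right hg₁close hM0.le
        _ = ε / 3 := by rw [hδ, div_mul_eq_mul_div, mul_div_mul_right _ _ hM0.ne']
    have e3 : |(∫ x in U, g₁ x ∂m) * L - L| ≤ ε / 3 := by
      have : (∫ x in U, g₁ x ∂m) * L - L = ((∫ x in U, g₁ x ∂m) - 1) * L := by ring
      rw [this, abs_mul]
      calc |(∫ x in U, g₁ x ∂m) - 1| * |L| ≤ δ * M :=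
            mul_le_mul hC₁ hLM (abs_nonneg _) hδ0.le
        _ = ε / 3 := by rw [hδ, div_mul_eq_mul_div, mul_div_mul_right _ _ hM0.ne']
    have e2 : |(∫ x in U, g₁ x * g (f t x) ∂m) - (∫ x in U, g₁ x ∂m) * L| < ε / 3 := by
      have := hN t htN
      rw [Real.dist_eq, sub_zero] at this
      rwa [hAint g] at this
    rw [Real.dist_eq, hrepr t ht0]
    calc |(∫ x in U, ρ x * g (f t x) ∂m) - L|
        ≤ |(∫ x in U, ρ x * g (f t x) ∂m) - ∫ x in U, g₁ x * g (f t x) ∂m|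
          + |(∫ x in U, g₁ x * g (f t x) ∂m) - (∫ x in U, g₁ x ∂m) * L|
          + |(∫ x in U, g₁ x ∂m) * L - L| := by
          have := abs_sub_le (∫ x in U, ρ x * g (f t x) ∂m)
            ((∫ x in U, g₁ x ∂m) * L) L
          have h2 := abs_sub_le (∫ x in U, ρ x * g (f t x) ∂m)
            (∫ x in U, g₁ x * g (f t x) ∂m) ((∫ x in U, g₁ x ∂m) * L)
          linarith
      _ < ε / 3 + ε / 3 + ε / 3 := by
          have := add_lt_add_of_le_of_lt e1 e2
          linarith
      _ = ε := by ring
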